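/- Homogenization of the ellipsoidal robust constraint: for every δ > 0, the condition "for all ζ ∈ ℝⁿ with ‖ζ‖₂ ≤ δ, ((δ μ⁽⁰⁾ + Σ_{j=1}^n ζⱼ μ⁽ʲ⁾)ᵀ x)² ≥ τ² δ²" holds if and only if "for all w ∈ ℝ^{n+1} with wᵀ B⁽ᴱ⁾ w ≥ 0, one has wᵀ A w ≥ 0". -/

import Mathlib

open Matrix

noncomputable section

/-- `a j = (μ⁽ʲ⁾)ᵀ x`, the dot product of the `j`-th expected-return vector with `x`. -/
def avec (n : ℕ) (x : Fin n → ℝ) (μ : Fin (n + 1) → Fin n → ℝ) : Fin (n + 1) → ℝ :=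
  fun j => μ j ⬝ᵥ x

/-- The symmetric matrix `A = a aᵀ - τ² e₀ e₀ᵀ`. -/
def Amat (n : ℕ) (x : Fin n → ℝ) (τ : ℝ) (μ : Fin (n + 1) → Fin n → ℝ) :
    Matrix (Fin (n + 1)) (Fin (n + 1)) ℝ :=
  Matrix.of fun i j =>
    avec n x μ i * avec n x μ j - if i = 0 ∧ j = 0 then τ ^ 2 else 0

/-- The matrix `B⁽ᴱ⁾ = diag(1, -1, …, -1)`. -/
def BE (n : ℕ) : Matrix (Fin (n + 1)) (Fin (n + 1)) ℝ :=
  Matrix.diagonal fun i => if i = 0 then 1 else -1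

/-- The matrix `B⁽ᴾ⁾ = e₀e₀ᵀ - J`: `(0,0)`-entry `1`, entries `-1` for `i, j ≥ 1`,
zero elsewhere. -/
def BP (n : ℕ) : Matrix (Fin (n + 1)) (Fin (n + 1)) ℝ :=
  Matrix.of fun i j =>
    if i = 0 ∧ j = 0 then 1 else if i ≠ 0 ∧ j ≠ 0 then -1 else 0

/-- A real matrix is positive semidefinite: `zᵀ M z ≥ 0` for all `z`. -/
def IsPSD {d : ℕ} (M : Matrix (Fin d) (Fin d) ℝ) : Prop :=
  ∀ z : Fin d → ℝ, 0 ≤ z ⬝ᵥ M *ᵥ z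

lemma quadBE (n : ℕ) (w : Fin (n+1) → ℝ) :
    w ⬝ᵥ BE n *ᵥ w = (w 0)^2 - ∑ j : Fin n, (w j.succ)^2 := by
  simp [BE, dotProduct, mulVec_diagonal, Fin.sum_univ_succ, apply_ite, Fin.succ_ne_zero]
  ring_nf

lemma quadA (n : ℕ) (x : Fin n → ℝ) (τ : ℝ) (μ : Fin (n + 1) → Fin n → ℝ)
    (w : Fin (n+1) → ℝ) :
    w ⬝ᵥ Amat n x τ μ *ᵥ w = (avec n x μ ⬝ᵥ w)^2 - τ^2 * (w 0)^2 := by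
  simp only [Amat, mulVec, dotProduct, of_apply, sub_mul, mul_sub,
    Finset.sum_sub_distrib, Finset.mul_sum, ite_mul, zero_mul]
  congr 1
  · rw [pow_two, Finset.sum_mul]
    congr 1; ext i; rw [Finset.mul_sum]; congr 1; ext j; ring
  · simp [Fin.sum_univ_succ, Fin.succ_ne_zero]; ring

lemma dot_expand (n : ℕ) (x : Fin n → ℝ) (μ : Fin (n + 1) → Fin n → ℝ)
    (δ : ℝ) (ζ : Fin n → ℝ) :
    (δ • μ 0 + ∑ j : Fin n, ζ j • μ j.succ) ⬝ᵥ x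
      = δ * avec n x μ 0 + ∑ j : Fin n, ζ j * avec n x μ j.succ := by
  rw [add_dotProduct, smul_dotProduct, smul_eq_mul]
  congr 1
  simp only [dotProduct, Finset.sum_apply, Pi.smul_apply, smul_eq_mul, Finset.sum_mul]
  rw [Finset.sum_comm]
  simp [avec, dotProduct, Finset.mul_sum, mul_assoc]

lemma avec_dot (n : ℕ) (x : Fin n → ℝ) (μ : Fin (n + 1) → Fin n → ℝ)
    (w : Fin (n+1) → ℝ) :
    avec n x μ ⬝ᵥ w = avec n x μ 0 * w 0 + ∑ j : Fin n, avec n x μ j.succ * w j.succ := by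
  rw [dotProduct, Fin.sum_univ_succ]

/-- Homogenization of the ellipsoidal robust constraint: the radius-`δ` robust condition
holds iff `wᵀ B⁽ᴱ⁾ w ≥ 0 → wᵀ A w ≥ 0` for all `w ∈ ℝ^{n+1}`. -/
theorem ellipsoid_homogenization (n : ℕ) (hn : 1 ≤ n) (x : Fin n → ℝ) (τ : ℝ)
    (μ : Fin (n + 1) → Fin n → ℝ) (δ : ℝ) (hδ : 0 < δ) :
    (∀ ζ : Fin n → ℝ, Real.sqrt (∑ j, ζ j ^ 2) ≤ δ →
        τ ^ 2 * δ ^ 2 ≤ ((δ • μ 0 + ∑ j : Fin n, ζ j • μ j.succ) ⬝ᵥ x) ^ 2) ↔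
      (∀ w : Fin (n + 1) → ℝ, 0 ≤ w ⬝ᵥ BE n *ᵥ w → 0 ≤ w ⬝ᵥ Amat n x τ μ *ᵥ w) := by
  set a : Fin (n+1) → ℝ := avec n x μ with ha
  constructor
  · intro h w hw
    rw [quadBE] at hw
    rw [quadA]
    by_cases h0 : w 0 = 0
    · have hsum : ∑ j : Fin n, (w j.succ)^2 ≤ 0 := by
        rw [h0] at hw; simpa using hw
      have hz : ∀ j : Fin n, w j.succ = 0 := by
        intro j
        have heq : ∑ j : Fin n, (w j.succ)^2 = 0 :=
          le_antisymm hsum (Finset.sum_nonneg fun j _ => sq_nonneg _)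
        have := (Finset.sum_eq_zero_iff_of_nonneg
          (fun j _ => sq_nonneg (w j.succ))).mp heq j (Finset.mem_univ j)
        exact (pow_eq_zero_iff two_ne_zero).mp this
      have hdz : a ⬝ᵥ w = 0 := by
        rw [avec_dot]; simp [h0, hz]
      rw [hdz, h0]; norm_num
    · have hw0 : 0 < (w 0)^2 := by positivity
      set ζ : Fin n → ℝ := fun j => δ * w j.succ / w 0 with hζdef
      have hsum : ∑ j : Fin n, ζ j ^ 2 = (δ^2/(w 0)^2) * ∑ j : Fin n, (w j.succ)^2 := by
        rw [Finset.mul_sum]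
        refine Finset.sum_congr rfl fun j _ => ?_
        simp only [hζdef, div_pow]; field_simp
      have hζle : Real.sqrt (∑ j, ζ j ^ 2) ≤ δ := by
        rw [show δ = Real.sqrt (δ^2) by rw [Real.sqrt_sq hδ.le]]
        apply Real.sqrt_le_sqrt
        rw [hsum]
        calc (δ^2/(w 0)^2) * ∑ j : Fin n, (w j.succ)^2
            ≤ (δ^2/(w 0)^2) * (w 0)^2 := by
              apply mul_le_mul_of_nonneg_left (by linarith) (by positivity)
          _ = δ^2 := by field_simp
      have key := h ζ hζle
      rw [dot_expand] at key
      have hrw : δ * a 0 + ∑ j : Fin n, ζ j * a j.succ = (δ / w 0) * (a ⬝ᵥ w) := by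
        rw [avec_dot, mul_add, Finset.mul_sum]
        congr 1
        · field_simp; ring
        · refine Finset.sum_congr rfl fun j _ => ?_
          rw [hζdef]; field_simp; ring
      rw [hrw, mul_pow, div_pow] at key
      have hkey2 : τ^2 * δ^2 * (w 0)^2 ≤ δ^2 * (a ⬝ᵥ w)^2 := by
        rw [div_mul_eq_mul_div, le_div_iff₀ hw0] at key
        linarith
      show 0 ≤ (a ⬝ᵥ w) ^ 2 - τ ^ 2 * w 0 ^ 2
      nlinarith [pow_pos hδ 2, sq_nonneg (a ⬝ᵥ w)]
  · intro h ζ hζ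
    set w : Fin (n+1) → ℝ := Fin.cons δ ζ with hwdef
    have hw0 : w 0 = δ := rfl
    have hws : ∀ j : Fin n, w j.succ = ζ j := fun j => Fin.cons_succ _ _ _
    have hsle : ∑ j : Fin n, ζ j ^ 2 ≤ δ^2 := by
      have h1 : (Real.sqrt (∑ j, ζ j ^ 2))^2 ≤ δ^2 :=
        pow_le_pow_left₀ (Real.sqrt_nonneg _) hζ 2
      rwa [Real.sq_sqrt (Finset.sum_nonneg fun j _ => sq_nonneg _)] at h1
    have hbe : 0 ≤ w ⬝ᵥ BE n *ᵥ w := by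
      rw [quadBE, hw0]
      simp only [hws]
      linarith
    have := h w hbe
    rw [quadA, hw0] at this
    have hdot : a ⬝ᵥ w = δ * a 0 + ∑ j : Fin n, ζ j * a j.succ := by
      rw [avec_dot, hw0]
      simp only [hws]; ring_nf
      rw [ha]; congr 1; · ring
      exact Finset.sum_congr rfl fun j _ => by ring
    rw [dot_expand]
    rw [hdot] at this
    linarith
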